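/- Any instantaneous lossless source encoder with causal side information has expected codeword length satisfying (1/n) E[L(X^n||Y^n)] ≥ (1/n) Σ_{i=1}^n H(X_i | X^{i-1}, Y^i) for all n, where entropy is in bits. -/

import Mathlib

open scoped Classical
open Real

noncomputable section

variable {α β : Type} [Fintype α] [DecidableEq α] [Fintype β] [DecidableEq β]

/-- Probability of the event `E` under the joint pmf `p` of `(X^n, Y^n)`. -/
def pr {n : ℕ} (p : (Fin n → α) → (Fin n → β) → ℝ)
    (E : (Fin n → α) → (Fin n → β) → Prop) : ℝ :=
  ∑ x, ∑ y, if E x y then p x y else 0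

/-- `p` is a probability mass function on pairs of sequences. -/
def IsPmf {n : ℕ} (p : (Fin n → α) → (Fin n → β) → ℝ) : Prop :=
  (∀ x y, 0 ≤ p x y) ∧ ∑ x, ∑ y, p x y = 1

/-- The conditional pmf `p(x_i | x^{i-1}, y^{i-d})` evaluated along `(x, y)`. -/
def condX {n : ℕ} (p : (Fin n → α) → (Fin n → β) → ℝ) (d : ℕ) (i : Fin n)
    (x : Fin n → α) (y : Fin n → β) : ℝ :=
  pr p (fun x' y' => (∀ j, j < i → x' j = x j) ∧ x' i = x i ∧
      ∀ j : Fin n, (j : ℕ) + d ≤ (i : ℕ) → y' j = y j) /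
  pr p (fun x' y' => (∀ j, j < i → x' j = x j) ∧
      ∀ j : Fin n, (j : ℕ) + d ≤ (i : ℕ) → y' j = y j)

/-- The conditional pmf `p(y_i | y^{i-1}, x^{i-d})` evaluated along `(x, y)`. -/
def condY {n : ℕ} (p : (Fin n → α) → (Fin n → β) → ℝ) (d : ℕ) (i : Fin n)
    (x : Fin n → α) (y : Fin n → β) : ℝ :=
  pr p (fun x' y' => (∀ j, j < i → y' j = y j) ∧ y' i = y i ∧
      ∀ j : Fin n, (j : ℕ) + d ≤ (i : ℕ) → x' j = x j) /
  pr p (fun x' y' => (∀ j, j < i → y' j = y j) ∧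
      ∀ j : Fin n, (j : ℕ) + d ≤ (i : ℕ) → x' j = x j)

/-- Causally conditioned pmf `p(x^n || y^{n-d}) = ∏ᵢ p(xᵢ | x^{i-1}, y^{i-d})`. -/
def ccX {n : ℕ} (p : (Fin n → α) → (Fin n → β) → ℝ) (d : ℕ)
    (x : Fin n → α) (y : Fin n → β) : ℝ :=
  ∏ i, condX p d i x y

/-- Causally conditioned pmf `p(y^n || x^{n-d}) = ∏ᵢ p(yᵢ | y^{i-1}, x^{i-d})`. -/
def ccY {n : ℕ} (p : (Fin n → α) → (Fin n → β) → ℝ) (d : ℕ)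
    (x : Fin n → α) (y : Fin n → β) : ℝ :=
  ∏ i, condY p d i x y

/-- Marginal pmf of `X^n`. -/
def pX {n : ℕ} (p : (Fin n → α) → (Fin n → β) → ℝ) (x : Fin n → α) : ℝ := ∑ y, p x y

/-- Marginal pmf of `Y^n`. -/
def pY {n : ℕ} (p : (Fin n → α) → (Fin n → β) → ℝ) (y : Fin n → β) : ℝ := ∑ x, p x y

/-- `H(X^n)` in bits. -/
def HX {n : ℕ} (p : (Fin n → α) → (Fin n → β) → ℝ) : ℝ :=
  -(∑ x, ∑ y, p x y * Real.logb 2 (pX p x))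

/-- `H(Y^n)` in bits. -/
def HY {n : ℕ} (p : (Fin n → α) → (Fin n → β) → ℝ) : ℝ :=
  -(∑ x, ∑ y, p x y * Real.logb 2 (pY p y))

/-- Joint entropy `H(X^n, Y^n)` in bits. -/
def Hjoint {n : ℕ} (p : (Fin n → α) → (Fin n → β) → ℝ) : ℝ :=
  -(∑ x, ∑ y, p x y * Real.logb 2 (p x y))

/-- Conditional entropy `H(X_i | X^{i-1}, Y^{i-d})` in bits. -/
def HcondX {n : ℕ} (p : (Fin n → α) → (Fin n → β) → ℝ) (d : ℕ) (i : Fin n) : ℝ :=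
  -(∑ x, ∑ y, p x y * Real.logb 2 (condX p d i x y))

/-- Conditional entropy `H(Y_i | Y^{i-1}, X^{i-d})` in bits. -/
def HcondY {n : ℕ} (p : (Fin n → α) → (Fin n → β) → ℝ) (d : ℕ) (i : Fin n) : ℝ :=
  -(∑ x, ∑ y, p x y * Real.logb 2 (condY p d i x y))

/-- Causally conditional entropy `H(X^n || Y^{n-d}) = Σᵢ H(Xᵢ | X^{i-1}, Y^{i-d})`. -/
def HccX {n : ℕ} (p : (Fin n → α) → (Fin n → β) → ℝ) (d : ℕ) : ℝ := ∑ i, HcondX p d i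

/-- Causally conditional entropy `H(Y^n || X^{n-d})`. -/
def HccY {n : ℕ} (p : (Fin n → α) → (Fin n → β) → ℝ) (d : ℕ) : ℝ := ∑ i, HcondY p d i

/-- Conditional mutual information `I(Y^i; X_i | X^{i-1})`
(as the expectation of `log (p(xᵢ|x^{i-1},y^i) / p(xᵢ|x^{i-1}))`;
note `condX p n` is `p(xᵢ|x^{i-1})`, conditioning on no `y`'s at all). -/
def cmiYX {n : ℕ} (p : (Fin n → α) → (Fin n → β) → ℝ) (i : Fin n) : ℝ :=
  ∑ x, ∑ y, p x y * Real.logb 2 (condX p 0 i x y / condX p n i x y)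

/-- Conditional mutual information `I(X^i; Y_i | Y^{i-1})`. -/
def cmiXY {n : ℕ} (p : (Fin n → α) → (Fin n → β) → ℝ) (i : Fin n) : ℝ :=
  ∑ x, ∑ y, p x y * Real.logb 2 (condY p 0 i x y / condY p n i x y)

/-- Directed information `I(Y^n → X^n) = Σᵢ I(Y^i; X_i | X^{i-1})`. -/
def dirYX {n : ℕ} (p : (Fin n → α) → (Fin n → β) → ℝ) : ℝ := ∑ i, cmiYX p i

/-- Directed information `I(X^n → Y^n) = Σᵢ I(X^i; Y_i | Y^{i-1})`. -/
def dirXY {n : ℕ} (p : (Fin n → α) → (Fin n → β) → ℝ) : ℝ := ∑ i, cmiXY p i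

/-- Directed information `I(Y^{n-1} → X^n) = Σᵢ I(Y^{i-1}; X_i | X^{i-1})`
(the term for `i = 1` vanishes, so we may sum over all `i`). -/
def dirY1X {n : ℕ} (p : (Fin n → α) → (Fin n → β) → ℝ) : ℝ :=
  ∑ i, ∑ x, ∑ y, p x y * Real.logb 2 (condX p 1 i x y / condX p n i x y)

/-- Mutual information `I(X^n; Y^n)` in bits. -/
def miXY {n : ℕ} (p : (Fin n → α) → (Fin n → β) → ℝ) : ℝ :=
  ∑ x, ∑ y, p x y * Real.logb 2 (p x y / (pX p x * pY p y))

/-- An instantaneous lossless source encoder with causal side information: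
`M i x y` is the binary codeword emitted at time `i`; it depends only on
`(x^i, y^i)`, and for every fixed history `(x^{i-1}, y^i)` the map
`x_i ↦ M i (x^{i-1} x_i) y` is prefix-free (in particular injective). -/
def IsCausalEncoder {n : ℕ}
    (M : Fin n → (Fin n → α) → (Fin n → β) → List Bool) : Prop :=
  (∀ i x x' y y', (∀ j, j ≤ i → x j = x' j) → (∀ j, j ≤ i → y j = y' j) →
    M i x y = M i x' y') ∧
  (∀ i x x' y, (∀ j, j < i → x j = x' j) → x i ≠ x' i →
    ¬ (M i x y <+: M i x' y))

/-- `L(x^n||y^n)`: total length of the concatenation `M₁(x₁,y₁) ⋯ Mₙ(xⁿ,yⁿ)`. -/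
def codeLen {n : ℕ} (M : Fin n → (Fin n → α) → (Fin n → β) → List Bool)
    (x : Fin n → α) (y : Fin n → β) : ℝ :=
  ∑ i, ((M i x y).length : ℝ)

set_option linter.unusedSectionVars false

-- ===================== auxiliary lemmas =====================

lemma card_filter_lt_fin (N m : ℕ) (hm : m ≤ N) :
    (Finset.univ.filter fun k : Fin N => (k : ℕ) < m).card = m := by
  have h : (Finset.univ.filter fun k : Fin N => (k : ℕ) < m).card = (Finset.range m).card :=
    Finset.card_bij' (fun (k : Fin N) _ => (k : ℕ))
      (fun j hj => (⟨j, lt_of_lt_of_le (Finset.mem_range.mp hj) hm⟩ : Fin N))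
      (fun a ha => Finset.mem_range.mpr ((Finset.mem_filter.mp ha).2))
      (fun b hb => Finset.mem_filter.mpr ⟨Finset.mem_univ _, Finset.mem_range.mp hb⟩)
      (fun a ha => rfl) (fun b hb => rfl)
  simpa [Finset.card_range] using h

lemma kraft {γ : Type*} [Fintype γ] (f : γ → List Bool)
    (hf : ∀ a b, a ≠ b → ¬ (f a <+: f b)) :
    ∑ a, ((2 : ℝ) ^ (f a).length)⁻¹ ≤ 1 := by
  set N := Finset.univ.sup fun a : γ => (f a).length with hN
  have hlen : ∀ a, (f a).length ≤ N :=
    fun a => Finset.le_sup (f := fun a : γ => (f a).length) (Finset.mem_univ a)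
  set E : γ → Finset (Fin N → Bool) := fun a =>
    Fintype.piFinset fun k => if h : (k : ℕ) < (f a).length
      then {(f a).get ⟨(k : ℕ), h⟩} else Finset.univ with hE
  have hmem : ∀ a (g : Fin N → Bool), g ∈ E a ↔
      ∀ (k : Fin N) (h : (k : ℕ) < (f a).length), g k = (f a).get ⟨(k : ℕ), h⟩ := by
    intro a g
    rw [hE]; simp only [Fintype.mem_piFinset]
    constructor
    · intro h k hk
      have := h k
      rw [dif_pos hk] at this
      simpa using this
    · intro h k
      by_cases hk : (k : ℕ) < (f a).length
      · rw [dif_pos hk]; simpa using h k hk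
      · rw [dif_neg hk]; simp
  have hcard : ∀ a, (E a).card = 2 ^ (N - (f a).length) := by
    intro a
    rw [hE]
    rw [Fintype.card_piFinset]
    have : ∀ k : Fin N, (if h : (k : ℕ) < (f a).length
        then ({(f a).get ⟨(k : ℕ), h⟩} : Finset Bool) else Finset.univ).card =
        if (k : ℕ) < (f a).length then 1 else 2 := by
      intro k
      by_cases hk : (k : ℕ) < (f a).length
      · rw [dif_pos hk, if_pos hk, Finset.card_singleton]
      · rw [dif_neg hk, if_neg hk]; simp
    rw [Finset.prod_congr rfl fun k _ => this k]
    rw [Finset.prod_ite (fun _ => 1) (fun _ => 2)]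
    rw [Finset.prod_const_one, Finset.prod_const, one_mul]
    congr 1
    have h1 := card_filter_lt_fin N (f a).length (hlen a)
    have h2 := Finset.card_filter_add_card_filter_not
      (s := (Finset.univ : Finset (Fin N))) (fun k : Fin N => (k : ℕ) < (f a).length)
    rw [Finset.card_univ, Fintype.card_fin] at h2
    omega
  have hdisj : ∀ a b : γ, a ≠ b → Disjoint (E a) (E b) := by
    intro a b hab
    rw [Finset.disjoint_left]
    intro g hga hgb
    have key : ∀ c d : γ, (f c).length ≤ (f d).length → g ∈ E c → g ∈ E d →
        f c <+: f d := by
      intro c d hcd hgc hgd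
      have : f c = (f d).take (f c).length := by
        apply List.ext_getElem
        · rw [List.length_take]; omega
        · intro k h1 h2
          rw [List.getElem_take]
          have hkN : k < N := lt_of_lt_of_le h1 (hlen c)
          have e1 := (hmem c g).mp hgc ⟨k, hkN⟩ h1
          have e2 := (hmem d g).mp hgd ⟨k, hkN⟩ (lt_of_lt_of_le h1 hcd)
          simp only [List.get_eq_getElem] at e1 e2
          rw [← e1, ← e2]
      rw [this]
      exact List.take_prefix _ _
    rcases le_total (f a).length (f b).length with h | h
    · exact hf a b hab (key a b h hga hgb)
    · exact hf b a (Ne.symm hab) (key b a h hgb hga)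
  have hsum : ∑ a, (E a).card ≤ 2 ^ N := by
    rw [← Finset.card_biUnion (fun a _ b _ hab => hdisj a b hab)]
    calc (Finset.univ.biUnion E).card ≤ Fintype.card (Fin N → Bool) :=
          Finset.card_le_univ _
      _ = 2 ^ N := by rw [Fintype.card_fun]; simp
  have hsumR : ∑ a, (2 : ℝ) ^ (N - (f a).length) ≤ 2 ^ N := by
    have h0 : ((∑ a, (E a).card : ℕ) : ℝ) ≤ ((2 ^ N : ℕ) : ℝ) := by exact_mod_cast hsum
    calc ∑ a, (2 : ℝ) ^ (N - (f a).length)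
        = ((∑ a, (E a).card : ℕ) : ℝ) := by
          push_cast
          exact Finset.sum_congr rfl fun a _ => by rw [hcard a]; push_cast; ring
      _ ≤ _ := by simpa using h0
  have h2N : (0 : ℝ) < 2 ^ N := by positivity
  rw [← mul_le_mul_iff_right₀ h2N, mul_one]
  calc (2 : ℝ) ^ N * ∑ a, ((2 : ℝ) ^ (f a).length)⁻¹
      = ∑ a, (2 : ℝ) ^ (N - (f a).length) := by
        rw [Finset.mul_sum]
        exact Finset.sum_congr rfl fun a _ => by
          rw [pow_sub₀ (2 : ℝ) two_ne_zero (hlen a)]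
    _ ≤ 2 ^ N := hsumR

-- basic facts about `pr`

lemma pr_nonneg {n : ℕ} {p : (Fin n → α) → (Fin n → β) → ℝ}
    (hp : ∀ x y, 0 ≤ p x y) (E : (Fin n → α) → (Fin n → β) → Prop) :
    0 ≤ pr p E :=
  Finset.sum_nonneg fun x _ => Finset.sum_nonneg fun y _ => by
    by_cases h : E x y
    · rw [if_pos h]; exact hp x y
    · rw [if_neg h]

lemma pr_congr {n : ℕ} (p : (Fin n → α) → (Fin n → β) → ℝ)
    {E E' : (Fin n → α) → (Fin n → β) → Prop} (h : ∀ x y, E x y ↔ E' x y) :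
    pr p E = pr p E' := by
  have : E = E' := funext fun x => funext fun y => propext (h x y)
  rw [this]

lemma pr_mono {n : ℕ} {p : (Fin n → α) → (Fin n → β) → ℝ}
    (hp : ∀ x y, 0 ≤ p x y) {E E' : (Fin n → α) → (Fin n → β) → Prop}
    (h : ∀ x y, E x y → E' x y) :
    pr p E ≤ pr p E' := by
  refine Finset.sum_le_sum fun x _ => Finset.sum_le_sum fun y _ => ?_
  by_cases hE : E x y
  · rw [if_pos hE, if_pos (h x y hE)]
  · rw [if_neg hE]
    by_cases hE' : E' x y
    · rw [if_pos hE']; exact hp x y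
    · rw [if_neg hE']

lemma pr_ge {n : ℕ} {p : (Fin n → α) → (Fin n → β) → ℝ}
    (hp : ∀ x y, 0 ≤ p x y) {E : (Fin n → α) → (Fin n → β) → Prop}
    {x : Fin n → α} {y : Fin n → β} (h : E x y) :
    p x y ≤ pr p E := by
  unfold pr
  have hin : ∀ x' : Fin n → α, 0 ≤ ∑ y' : Fin n → β, (if E x' y' then p x' y' else 0) :=
    fun x' => Finset.sum_nonneg fun y' _ => by
      by_cases hE : E x' y'
      · rw [if_pos hE]; exact hp x' y'
      · rw [if_neg hE]
  calc p x y = (if E x y then p x y else 0) := by rw [if_pos h]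
    _ ≤ ∑ y' : Fin n → β, (if E x y' then p x y' else 0) := by
        refine Finset.single_le_sum (f := fun y' : Fin n → β => if E x y' then p x y' else 0)
          (fun y' _ => ?_) (Finset.mem_univ y)
        show (0 : ℝ) ≤ if E x y' then p x y' else 0
        by_cases hE : E x y'
        · rw [if_pos hE]; exact hp x y'
        · rw [if_neg hE]
    _ ≤ ∑ x' : Fin n → α, ∑ y' : Fin n → β, (if E x' y' then p x' y' else 0) :=
        Finset.single_le_sum
          (f := fun x' : Fin n → α => ∑ y' : Fin n → β, (if E x' y' then p x' y' else 0))
          (fun x' _ => hin x') (Finset.mem_univ x)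

-- the numerator / denominator events of `condX p 0 i`

def evN {n : ℕ} (i : Fin n) (w : (Fin n → α) × (Fin n → β)) :
    (Fin n → α) → (Fin n → β) → Prop :=
  fun x' y' => (∀ j, j < i → x' j = w.1 j) ∧ x' i = w.1 i ∧
    ∀ j : Fin n, (j : ℕ) + 0 ≤ (i : ℕ) → y' j = w.2 j

def evD {n : ℕ} (i : Fin n) (w : (Fin n → α) × (Fin n → β)) :
    (Fin n → α) → (Fin n → β) → Prop :=
  fun x' y' => (∀ j, j < i → x' j = w.1 j) ∧
    ∀ j : Fin n, (j : ℕ) + 0 ≤ (i : ℕ) → y' j = w.2 j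

lemma condX_eq {n : ℕ} (p : (Fin n → α) → (Fin n → β) → ℝ) (i : Fin n)
    (x : Fin n → α) (y : Fin n → β) :
    condX p 0 i x y = pr p (evN i (x, y)) / pr p (evD i (x, y)) := rfl

lemma condX_pos {n : ℕ} {p : (Fin n → α) → (Fin n → β) → ℝ}
    (hp : ∀ x y, 0 ≤ p x y) (i : Fin n) {x : Fin n → α} {y : Fin n → β}
    (h : 0 < p x y) : 0 < condX p 0 i x y := by
  have hN : p x y ≤ pr p (evN i (x, y)) :=
    pr_ge hp ⟨fun j _ => rfl, rfl, fun j _ => rfl⟩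
  have hD : pr p (evN i (x, y)) ≤ pr p (evD i (x, y)) :=
    pr_mono hp (fun x' y' hE => ⟨hE.1, hE.2.2⟩)
  rw [condX_eq]
  exact div_pos (lt_of_lt_of_le h hN) (lt_of_lt_of_le h (le_trans hN hD))

-- canonicalization map

def can {n : ℕ} (i : Fin n) (a0 : α) (b0 : β) :
    ((Fin n → α) × (Fin n → β)) → ((Fin n → α) × (Fin n → β)) :=
  fun z => (fun j => if j ≤ i then z.1 j else a0, fun j => if j ≤ i then z.2 j else b0)

lemma can_idem {n : ℕ} (i : Fin n) (a0 : α) (b0 : β)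
    (z : (Fin n → α) × (Fin n → β)) : can i a0 b0 (can i a0 b0 z) = can i a0 b0 z := by
  unfold can
  refine Prod.ext ?_ ?_ <;> · funext j; by_cases hj : j ≤ i <;> simp [hj]

lemma evN_of_can_eq {n : ℕ} {i : Fin n} {a0 : α} {b0 : β}
    {z w : (Fin n → α) × (Fin n → β)} (h : can i a0 b0 z = w) :
    evN i w z.1 z.2 := by
  subst h
  refine ⟨fun j hj => ?_, ?_, fun j hj => ?_⟩
  · show z.1 j = (can i a0 b0 z).1 j
    simp [can, le_of_lt hj]
  · show z.1 i = (can i a0 b0 z).1 i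
    simp [can]
  · have hji : j ≤ i := by rw [Fin.le_def]; omega
    show z.2 j = (can i a0 b0 z).2 j
    simp [can, hji]

lemma M_can {n : ℕ} {M : Fin n → (Fin n → α) → (Fin n → β) → List Bool}
    (hM : IsCausalEncoder M) (i : Fin n) (a0 : α) (b0 : β)
    (z : (Fin n → α) × (Fin n → β)) :
    M i (can i a0 b0 z).1 (can i a0 b0 z).2 = M i z.1 z.2 := by
  refine (hM.1 i z.1 (can i a0 b0 z).1 z.2 (can i a0 b0 z).2
    (fun j hj => ?_) (fun j hj => ?_)).symm
  · simp [can, hj]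
  · simp [can, hj]

lemma pr_evN_can {n : ℕ} (p : (Fin n → α) → (Fin n → β) → ℝ) (i : Fin n)
    (a0 : α) (b0 : β) (z : (Fin n → α) × (Fin n → β)) :
    pr p (evN i (can i a0 b0 z)) = pr p (evN i z) := by
  refine pr_congr p fun x' y' => ?_
  unfold evN
  have h1 : ∀ j : Fin n, j < i → (can i a0 b0 z).1 j = z.1 j :=
    fun j hj => by simp [can, le_of_lt hj]
  have h2 : (can i a0 b0 z).1 i = z.1 i := by simp [can]
  have h3 : ∀ j : Fin n, (j : ℕ) + 0 ≤ (i : ℕ) → (can i a0 b0 z).2 j = z.2 j := by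
    intro j hj
    have hji : j ≤ i := by rw [Fin.le_def]; omega
    simp [can, hji]
  constructor
  · rintro ⟨hA, hB, hC⟩
    exact ⟨fun j hj => (hA j hj).trans (h1 j hj), hB.trans h2,
      fun j hj => (hC j hj).trans (h3 j hj)⟩
  · rintro ⟨hA, hB, hC⟩
    exact ⟨fun j hj => (hA j hj).trans (h1 j hj).symm, hB.trans h2.symm,
      fun j hj => (hC j hj).trans (h3 j hj).symm⟩

lemma pr_evD_can {n : ℕ} (p : (Fin n → α) → (Fin n → β) → ℝ) (i : Fin n)
    (a0 : α) (b0 : β) (z : (Fin n → α) × (Fin n → β)) :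
    pr p (evD i (can i a0 b0 z)) = pr p (evD i z) := by
  refine pr_congr p fun x' y' => ?_
  unfold evD
  have h1 : ∀ j : Fin n, j < i → (can i a0 b0 z).1 j = z.1 j :=
    fun j hj => by simp [can, le_of_lt hj]
  have h3 : ∀ j : Fin n, (j : ℕ) + 0 ≤ (i : ℕ) → (can i a0 b0 z).2 j = z.2 j := by
    intro j hj
    have hji : j ≤ i := by rw [Fin.le_def]; omega
    simp [can, hji]
  constructor
  · rintro ⟨hA, hC⟩
    exact ⟨fun j hj => (hA j hj).trans (h1 j hj), fun j hj => (hC j hj).trans (h3 j hj)⟩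
  · rintro ⟨hA, hC⟩
    exact ⟨fun j hj => (hA j hj).trans (h1 j hj).symm,
      fun j hj => (hC j hj).trans (h3 j hj).symm⟩

def emap {n : ℕ} (i : Fin n) (a0 : α) (b0 : β) (z : (Fin n → α) × (Fin n → β))
    (a : α) : (Fin n → α) × (Fin n → β) :=
  (fun j => if j = i then a else if j ≤ i then z.1 j else a0,
   fun j => if j ≤ i then z.2 j else b0)

lemma kraft_step {n : ℕ}
    {M : Fin n → (Fin n → α) → (Fin n → β) → List Bool} (hM : IsCausalEncoder M)
    (i : Fin n) (a0 : α) (b0 : β) (z : (Fin n → α) × (Fin n → β)) :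
    ∑ w : (Fin n → α) × (Fin n → β),
      (if can i a0 b0 w = w ∧ evD i w z.1 z.2
        then ((2 : ℝ) ^ (M i w.1 w.2).length)⁻¹ else 0) ≤ 1 := by
  have hset : Finset.univ.filter
      (fun w : (Fin n → α) × (Fin n → β) => can i a0 b0 w = w ∧ evD i w z.1 z.2)
      = Finset.image (emap i a0 b0 z) Finset.univ := by
    ext w
    simp only [Finset.mem_filter, Finset.mem_univ, true_and, Finset.mem_image]
    constructor
    · rintro ⟨hcan, hD⟩
      refine ⟨w.1 i, Prod.ext ?_ ?_⟩
      · funext j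
        show (if j = i then w.1 i else if j ≤ i then z.1 j else a0) = w.1 j
        by_cases hji : j = i
        · rw [if_pos hji, hji]
        · rw [if_neg hji]
          by_cases hj : j ≤ i
          · rw [if_pos hj]; exact hD.1 j (lt_of_le_of_ne hj hji)
          · rw [if_neg hj]
            conv_rhs => rw [← hcan]
            exact (if_neg hj).symm
      · funext j
        show (if j ≤ i then z.2 j else b0) = w.2 j
        by_cases hj : j ≤ i
        · rw [if_pos hj]; exact hD.2 j (by rw [Fin.le_def] at hj; omega)
        · rw [if_neg hj]
          conv_rhs => rw [← hcan]
          exact (if_neg hj).symm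
    · rintro ⟨a, rfl⟩
      refine ⟨Prod.ext ?_ ?_, fun j hj => ?_, fun j hj => ?_⟩
      · funext j
        show (if j ≤ i then (emap i a0 b0 z a).1 j else a0) = (emap i a0 b0 z a).1 j
        by_cases hj : j ≤ i
        · rw [if_pos hj]
        · rw [if_neg hj]
          show a0 = if j = i then a else if j ≤ i then z.1 j else a0
          rw [if_neg (by rintro rfl; exact hj le_rfl), if_neg hj]
      · funext j
        show (if j ≤ i then (emap i a0 b0 z a).2 j else b0) = (emap i a0 b0 z a).2 j
        by_cases hj : j ≤ i
        · rw [if_pos hj]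
        · rw [if_neg hj]
          show b0 = if j ≤ i then z.2 j else b0
          rw [if_neg hj]
      · show z.1 j = if j = i then a else if j ≤ i then z.1 j else a0
        rw [if_neg (ne_of_lt hj), if_pos (le_of_lt hj)]
      · have hji : j ≤ i := by rw [Fin.le_def]; omega
        show z.2 j = if j ≤ i then z.2 j else b0
        rw [if_pos hji]
  rw [Finset.sum_ite, Finset.sum_const_zero, add_zero, hset]
  have hinj : ∀ a ∈ Finset.univ, ∀ b ∈ Finset.univ,
      emap i a0 b0 z a = emap i a0 b0 z b → a = b := by
    intro a _ b _ hab
    have h := congrFun (congrArg Prod.fst hab) i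
    have h2 : (if (i : Fin n) = i then a else if i ≤ i then z.1 i else a0)
        = (if (i : Fin n) = i then b else if i ≤ i then z.1 i else a0) := h
    rwa [if_pos rfl, if_pos rfl] at h2
  rw [Finset.sum_image hinj]
  apply kraft
  intro a b hab
  apply hM.2 i (emap i a0 b0 z a).1 (emap i a0 b0 z b).1 (emap i a0 b0 z a).2
  · intro j hj
    show (if j = i then a else if j ≤ i then z.1 j else a0)
      = (if j = i then b else if j ≤ i then z.1 j else a0)
    rw [if_neg (ne_of_lt hj), if_neg (ne_of_lt hj)]
  · show (if (i : Fin n) = i then a else if i ≤ i then z.1 i else a0)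
      ≠ (if (i : Fin n) = i then b else if i ≤ i then z.1 i else a0)
    rw [if_pos rfl, if_pos rfl]
    exact hab

lemma S_le_one {n : ℕ} (p : (Fin n → α) → (Fin n → β) → ℝ) (hp : IsPmf p)
    (M : Fin n → (Fin n → α) → (Fin n → β) → List Bool) (hM : IsCausalEncoder M)
    (i : Fin n) (a0 : α) (b0 : β) :
    ∑ x, ∑ y, p x y * (((2 : ℝ) ^ (M i x y).length)⁻¹ / condX p 0 i x y) ≤ 1 := by
  classical
  set g : ((Fin n → α) × (Fin n → β)) → ℝ := fun w =>
    ((2 : ℝ) ^ (M i w.1 w.2).length)⁻¹ * (pr p (evD i w) / pr p (evN i w)) with hg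
  have step1 : ∑ x, ∑ y, p x y * (((2 : ℝ) ^ (M i x y).length)⁻¹ / condX p 0 i x y)
      = ∑ z : (Fin n → α) × (Fin n → β), p z.1 z.2 * g (can i a0 b0 z) := by
    rw [Fintype.sum_prod_type]
    refine Finset.sum_congr rfl fun x _ => Finset.sum_congr rfl fun y _ => ?_
    have e1 : g (can i a0 b0 (x, y)) = ((2 : ℝ) ^ (M i x y).length)⁻¹
        * (pr p (evD i (x, y)) / pr p (evN i (x, y))) := by
      show ((2 : ℝ) ^ (M i (can i a0 b0 (x, y)).1 (can i a0 b0 (x, y)).2).length)⁻¹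
          * (pr p (evD i (can i a0 b0 (x, y))) / pr p (evN i (can i a0 b0 (x, y)))) = _
      rw [M_can hM i a0 b0 (x, y), pr_evD_can p i a0 b0 (x, y), pr_evN_can p i a0 b0 (x, y)]
    rw [e1, condX_eq, div_eq_mul_inv ((2 : ℝ) ^ (M i x y).length)⁻¹, inv_div]
  rw [step1]
  rw [← Finset.sum_fiberwise Finset.univ (can i a0 b0)
    (fun z => p z.1 z.2 * g (can i a0 b0 z))]
  have step3 : ∀ w : (Fin n → α) × (Fin n → β),
      (∑ z ∈ Finset.univ.filter (fun z => can i a0 b0 z = w), p z.1 z.2 * g (can i a0 b0 z))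
      ≤ (if can i a0 b0 w = w then ((2 : ℝ) ^ (M i w.1 w.2).length)⁻¹ * pr p (evD i w) else 0) := by
    intro w
    have hrw : (∑ z ∈ Finset.univ.filter (fun z => can i a0 b0 z = w),
        p z.1 z.2 * g (can i a0 b0 z))
        = g w * ∑ z ∈ Finset.univ.filter (fun z => can i a0 b0 z = w), p z.1 z.2 := by
      rw [Finset.mul_sum]
      refine Finset.sum_congr rfl fun z hz => ?_
      rw [(Finset.mem_filter.mp hz).2, mul_comm]
    rw [hrw]
    by_cases hw : can i a0 b0 w = w
    · rw [if_pos hw]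
      set q : ℝ := ∑ z ∈ Finset.univ.filter (fun z => can i a0 b0 z = w), p z.1 z.2 with hq
      have hq0 : 0 ≤ q := Finset.sum_nonneg fun z _ => hp.1 z.1 z.2
      have hqN : q ≤ pr p (evN i w) := by
        have hNrw : pr p (evN i w)
            = ∑ z : (Fin n → α) × (Fin n → β), (if evN i w z.1 z.2 then p z.1 z.2 else 0) := by
          rw [Fintype.sum_prod_type]; rfl
        rw [hq, Finset.sum_filter, hNrw]
        refine Finset.sum_le_sum fun z _ => ?_
        by_cases hz : can i a0 b0 z = w
        · rw [if_pos hz, if_pos (evN_of_can_eq hz)]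
        · rw [if_neg hz]
          by_cases hz2 : evN i w z.1 z.2
          · rw [if_pos hz2]; exact hp.1 z.1 z.2
          · rw [if_neg hz2]
      have hD0 : 0 ≤ pr p (evD i w) := pr_nonneg hp.1 _
      have hN0 : 0 ≤ pr p (evN i w) := pr_nonneg hp.1 _
      rcases eq_or_lt_of_le hN0 with hN | hN
      · have hq' : q = 0 := le_antisymm (by rw [← hN] at hqN; exact hqN) hq0
        rw [hq', mul_zero]
        positivity
      · rw [hg]
        simp only []
        rw [mul_assoc]
        refine mul_le_mul_of_nonneg_left ?_ (by positivity)
        calc pr p (evD i w) / pr p (evN i w) * q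
            ≤ pr p (evD i w) / pr p (evN i w) * pr p (evN i w) :=
              mul_le_mul_of_nonneg_left hqN (div_nonneg hD0 hN0)
          _ = pr p (evD i w) := div_mul_cancel₀ _ (ne_of_gt hN)
    · rw [if_neg hw]
      have hempty : Finset.univ.filter
          (fun z : (Fin n → α) × (Fin n → β) => can i a0 b0 z = w) = ∅ := by
        rw [Finset.filter_eq_empty_iff]
        intro z _ hz
        exact hw (by rw [← hz, can_idem])
      rw [hempty, Finset.sum_empty, mul_zero]
  refine le_trans (Finset.sum_le_sum fun w _ => step3 w) ?_
  have step4 : ∀ w : (Fin n → α) × (Fin n → β),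
      (if can i a0 b0 w = w then ((2 : ℝ) ^ (M i w.1 w.2).length)⁻¹ * pr p (evD i w) else 0)
      = ∑ z : (Fin n → α) × (Fin n → β),
          (if can i a0 b0 w = w ∧ evD i w z.1 z.2
            then ((2 : ℝ) ^ (M i w.1 w.2).length)⁻¹ * p z.1 z.2 else 0) := by
    intro w
    by_cases hw : can i a0 b0 w = w
    · rw [if_pos hw]
      have hDrw : pr p (evD i w)
          = ∑ z : (Fin n → α) × (Fin n → β), (if evD i w z.1 z.2 then p z.1 z.2 else 0) := by
        rw [Fintype.sum_prod_type]; rfl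
      rw [hDrw, Finset.mul_sum]
      refine Finset.sum_congr rfl fun z _ => ?_
      rw [ite_and, if_pos hw]
      by_cases hz : evD i w z.1 z.2
      · rw [if_pos hz, if_pos hz]
      · rw [if_neg hz, if_neg hz, mul_zero]
    · rw [if_neg hw]
      rw [Finset.sum_congr rfl fun z _ => if_neg (by tauto), Finset.sum_const_zero]
  rw [Finset.sum_congr rfl fun w _ => step4 w]
  rw [Finset.sum_comm]
  have step5 : ∀ z : (Fin n → α) × (Fin n → β),
      (∑ w : (Fin n → α) × (Fin n → β),
        (if can i a0 b0 w = w ∧ evD i w z.1 z.2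
          then ((2 : ℝ) ^ (M i w.1 w.2).length)⁻¹ * p z.1 z.2 else 0))
      ≤ p z.1 z.2 := by
    intro z
    have hrw : ∀ w : (Fin n → α) × (Fin n → β),
        (if can i a0 b0 w = w ∧ evD i w z.1 z.2
          then ((2 : ℝ) ^ (M i w.1 w.2).length)⁻¹ * p z.1 z.2 else 0)
        = (if can i a0 b0 w = w ∧ evD i w z.1 z.2
            then ((2 : ℝ) ^ (M i w.1 w.2).length)⁻¹ else 0) * p z.1 z.2 := by
      intro w
      by_cases hw : can i a0 b0 w = w ∧ evD i w z.1 z.2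
      · rw [if_pos hw, if_pos hw]
      · rw [if_neg hw, if_neg hw, zero_mul]
    rw [Finset.sum_congr rfl fun w _ => hrw w, ← Finset.sum_mul]
    calc (∑ w : (Fin n → α) × (Fin n → β),
          (if can i a0 b0 w = w ∧ evD i w z.1 z.2
            then ((2 : ℝ) ^ (M i w.1 w.2).length)⁻¹ else 0)) * p z.1 z.2
        ≤ 1 * p z.1 z.2 :=
          mul_le_mul_of_nonneg_right (kraft_step hM i a0 b0 z) (hp.1 z.1 z.2)
      _ = p z.1 z.2 := one_mul _
  refine le_trans (Finset.sum_le_sum fun z _ => step5 z) ?_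
  rw [Fintype.sum_prod_type]
  exact le_of_eq hp.2

lemma key_step {n : ℕ} (p : (Fin n → α) → (Fin n → β) → ℝ) (hp : IsPmf p)
    (M : Fin n → (Fin n → α) → (Fin n → β) → List Bool) (hM : IsCausalEncoder M)
    (i : Fin n) :
    HcondX p 0 i ≤ ∑ x, ∑ y, p x y * ((M i x y).length : ℝ) := by
  classical
  have hα : Nonempty α := by
    by_contra h
    rw [not_nonempty_iff] at h
    haveI : IsEmpty (Fin n → α) := ⟨fun x => h.false (x i)⟩
    have h2 := hp.2
    rw [Finset.univ_eq_empty, Finset.sum_empty] at h2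
    exact zero_ne_one h2
  have hβ : Nonempty β := by
    by_contra h
    rw [not_nonempty_iff] at h
    haveI : IsEmpty (Fin n → β) := ⟨fun y => h.false (y i)⟩
    have h2 := hp.2
    rw [Finset.sum_congr rfl fun x _ => (by rw [Finset.univ_eq_empty, Finset.sum_empty] :
      ∑ y, p x y = 0), Finset.sum_const_zero] at h2
    exact zero_ne_one h2
  obtain ⟨a0⟩ := hα
  obtain ⟨b0⟩ := hβ
  have hS := S_le_one p hp M hM i a0 b0
  have hlog2 : (0 : ℝ) < Real.log 2 := Real.log_pos one_lt_two
  have hterm : ∀ x y,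
      p x y * (-(Real.logb 2 (condX p 0 i x y)) - ((M i x y).length : ℝ))
      ≤ (p x y * (((2 : ℝ) ^ (M i x y).length)⁻¹ / condX p 0 i x y) - p x y)
        / Real.log 2 := by
    intro x y
    rcases eq_or_lt_of_le (hp.1 x y) with h0 | hpos
    · rw [← h0]; simp
    · have hc : 0 < condX p 0 i x y := condX_pos hp.1 i hpos
      set t : ℝ := ((2 : ℝ) ^ (M i x y).length)⁻¹ / condX p 0 i x y with ht
      have htpos : 0 < t := by rw [ht]; positivity
      have h1 : -(Real.logb 2 (condX p 0 i x y)) - ((M i x y).length : ℝ)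
          = Real.logb 2 t := by
        rw [ht, Real.logb_div (by positivity) (ne_of_gt hc), Real.logb_inv,
          Real.logb_pow, Real.logb_self_eq_one one_lt_two]
        ring
      rw [h1]
      have h2 : Real.logb 2 t ≤ (t - 1) / Real.log 2 := by
        rw [Real.logb]
        exact (div_le_div_iff_of_pos_right hlog2).mpr (Real.log_le_sub_one_of_pos htpos)
      calc p x y * Real.logb 2 t ≤ p x y * ((t - 1) / Real.log 2) :=
            mul_le_mul_of_nonneg_left h2 (le_of_lt hpos)
        _ = (p x y * t - p x y) / Real.log 2 := by ring
  have hsum : ∑ x, ∑ y,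
      p x y * (-(Real.logb 2 (condX p 0 i x y)) - ((M i x y).length : ℝ)) ≤ 0 := by
    calc ∑ x, ∑ y, p x y * (-(Real.logb 2 (condX p 0 i x y)) - ((M i x y).length : ℝ))
        ≤ ∑ x, ∑ y, (p x y * (((2 : ℝ) ^ (M i x y).length)⁻¹ / condX p 0 i x y) - p x y)
            / Real.log 2 :=
          Finset.sum_le_sum fun x _ => Finset.sum_le_sum fun y _ => hterm x y
      _ = ((∑ x, ∑ y, p x y * (((2 : ℝ) ^ (M i x y).length)⁻¹ / condX p 0 i x y)) - 1)
            / Real.log 2 := by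
          rw [Finset.sum_congr rfl fun x (_ : x ∈ Finset.univ) => (Finset.sum_div _ _ _).symm,
            ← Finset.sum_div]
          congr 1
          rw [Finset.sum_congr rfl fun x (_ : x ∈ Finset.univ) =>
            Finset.sum_sub_distrib (s := Finset.univ) _ _, Finset.sum_sub_distrib, hp.2]
      _ ≤ 0 := div_nonpos_of_nonpos_of_nonneg (sub_nonpos.mpr hS) (le_of_lt hlog2)
  have expand : ∑ x, ∑ y,
      p x y * (-(Real.logb 2 (condX p 0 i x y)) - ((M i x y).length : ℝ))
      = -(∑ x, ∑ y, p x y * Real.logb 2 (condX p 0 i x y))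
        - ∑ x, ∑ y, p x y * ((M i x y).length : ℝ) := by
    rw [Finset.sum_congr rfl fun x (_ : x ∈ Finset.univ) => Finset.sum_congr rfl
      fun y (_ : y ∈ Finset.univ) => (by ring :
        p x y * (-(Real.logb 2 (condX p 0 i x y)) - ((M i x y).length : ℝ))
        = (-(p x y * Real.logb 2 (condX p 0 i x y))) - p x y * ((M i x y).length : ℝ))]
    rw [Finset.sum_congr rfl fun x (_ : x ∈ Finset.univ) =>
      Finset.sum_sub_distrib (s := Finset.univ) _ _, Finset.sum_sub_distrib]
    rw [Finset.sum_congr rfl fun x (_ : x ∈ Finset.univ) =>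
      (Finset.sum_neg_distrib (s := Finset.univ) _), Finset.sum_neg_distrib]
  unfold HcondX
  rw [expand] at hsum
  linarith

/-- converse for instantaneous lossless compression with causal side
information: `(1/n) E[L(X^n||Y^n)] ≥ (1/n) Σᵢ H(Xᵢ | X^{i-1}, Y^i)`. -/
theorem lossless_causal_coding_converse {n : ℕ}
    (p : (Fin n → α) → (Fin n → β) → ℝ) (hp : IsPmf p)
    (M : Fin n → (Fin n → α) → (Fin n → β) → List Bool)
    (hM : IsCausalEncoder M) :
    (n : ℝ)⁻¹ * (∑ i, HcondX p 0 i) ≤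
      (n : ℝ)⁻¹ * ∑ x, ∑ y, p x y * codeLen M x y := by
  have hrhs : ∑ x, ∑ y, p x y * codeLen M x y
      = ∑ i : Fin n, ∑ x, ∑ y, p x y * ((M i x y).length : ℝ) := by
    unfold codeLen
    rw [Finset.sum_congr rfl fun x (_ : x ∈ Finset.univ) => Finset.sum_congr rfl
      fun y (_ : y ∈ Finset.univ) => Finset.mul_sum Finset.univ _ _]
    rw [Finset.sum_congr rfl fun x (_ : x ∈ Finset.univ) => Finset.sum_comm, Finset.sum_comm]
  rw [hrhs]
  refine mul_le_mul_of_nonneg_left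
    (Finset.sum_le_sum fun i _ => key_step p hp M hM i)
    (inv_nonneg.mpr (Nat.cast_nonneg n))
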